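/- Let ρ > 0 and let ν_m ≠ ν_{m'} be two distinct eigenvalues (roots of ρν/(1+ν)² = −m and ρν/(1+ν)² = −m' respectively, possibly with m = m' but different branches). Let φ_m(n), φ_{m'}(n) be the corresponding eigenfunctions satisfying (ν+1)(n+1)φ(n) = nφ(n−1) − ρφ(n) + ρφ(n+1). Then Σ_{n=0}^∞ ((n+1)/n!) ρⁿ φ_m(n) φ_{m'}(n) = 0, provided this series converges absolutely. -/

import Mathlib

open Filter Topology

set_option maxHeartbeats 1000000

theorem eigenfunction_orthogonality (ρ : ℝ) (hρ : 0 < ρ) (νm νm' : ℝ) (hne : νm ≠ νm')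
    (φ φ' : ℕ → ℝ)
    (hφ : ∀ n : ℕ, (νm + 1) * (n + 1) * φ n =
      (n : ℝ) * φ (n - 1) - ρ * φ n + ρ * φ (n + 1))
    (hφ' : ∀ n : ℕ, (νm' + 1) * (n + 1) * φ' n =
      (n : ℝ) * φ' (n - 1) - ρ * φ' n + ρ * φ' (n + 1))
    (hsum : Summable fun n : ℕ =>
      ((n : ℝ) + 1) / (Nat.factorial n : ℝ) * ρ ^ n * |φ n * φ' n|) :
    ∑' n : ℕ, ((n : ℝ) + 1) / (Nat.factorial n : ℝ) * ρ ^ n * φ n * φ' n = 0 := by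
  have hρ0 : ρ ≠ 0 := ne_of_gt hρ
  obtain ⟨u, hu⟩ : ∃ u : ℕ → ℝ, ∀ n, u n = ρ^n / (Nat.factorial n : ℝ) := ⟨_, fun _ => rfl⟩
  obtain ⟨t, ht⟩ : ∃ t : ℕ → ℝ, ∀ n, t n = u n * (φ n * φ' n) := ⟨_, fun _ => rfl⟩
  obtain ⟨c, hc⟩ : ∃ c : ℕ → ℝ, ∀ n, c n = u n * (φ (n+1) * φ' n) := ⟨_, fun _ => rfl⟩
  obtain ⟨c', hc'⟩ : ∃ c' : ℕ → ℝ, ∀ n, c' n = u n * (φ n * φ' (n+1)) := ⟨_, fun _ => rfl⟩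
  have hfac : ∀ n : ℕ, (Nat.factorial n : ℝ) ≠ 0 :=
    fun n => Nat.cast_ne_zero.2 (Nat.factorial_ne_zero n)
  have huu : ∀ n : ℕ, ((n:ℝ)+1) * u (n+1) = ρ * u n := by
    intro n
    rw [hu, hu, Nat.factorial_succ, pow_succ]
    have := hfac n
    push_cast
    field_simp
  -- scalar recurrences
  have Eφ : ∀ n : ℕ, ρ * φ (n+2) = ((νm+1)*((n:ℝ)+2)+ρ) * φ (n+1) - ((n:ℝ)+1) * φ n := by
    intro n
    have h := hφ (n+1)
    simp only [Nat.add_sub_cancel] at h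
    push_cast at h
    linarith
  have Eφ' : ∀ n : ℕ, ρ * φ' (n+2) = ((νm'+1)*((n:ℝ)+2)+ρ) * φ' (n+1) - ((n:ℝ)+1) * φ' n := by
    intro n
    have h := hφ' (n+1)
    simp only [Nat.add_sub_cancel] at h
    push_cast at h
    linarith
  have Eφ0 : ρ * φ 1 = (νm+1+ρ) * φ 0 := by
    have h := hφ 0
    norm_num at h
    linarith
  have Eφ'0 : ρ * φ' 1 = (νm'+1+ρ) * φ' 0 := by
    have h := hφ' 0
    norm_num at h
    linarith
  -- key identities
  have I1 : ∀ n : ℕ, ρ * c (n+1) + ρ * c' n = ((νm+1)*((n:ℝ)+2)+ρ) * t (n+1) := by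
    intro n
    simp only [hc, hc', ht]
    linear_combination (u (n+1) * φ' (n+1)) * Eφ n - (φ n * φ' (n+1)) * huu n
  have I2 : ∀ n : ℕ, ρ * c' (n+1) + ρ * c n = ((νm'+1)*((n:ℝ)+2)+ρ) * t (n+1) := by
    intro n
    simp only [hc, hc', ht]
    linear_combination (u (n+1) * φ (n+1)) * Eφ' n - (φ' n * φ (n+1)) * huu n
  have I10 : ρ * c 0 = (νm+1+ρ) * t 0 := by
    simp only [hc, ht]
    linear_combination (u 0 * φ' 0) * Eφ0
  have I20 : ρ * c' 0 = (νm'+1+ρ) * t 0 := by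
    simp only [hc', ht]
    linear_combination (u 0 * φ 0) * Eφ'0
  -- e n = u n * (φ (n+2) * φ' n), intermediate
  obtain ⟨e, he⟩ : ∃ e : ℕ → ℝ, ∀ n, e n = u n * (φ (n+2) * φ' n) := ⟨_, fun _ => rfl⟩
  have J1 : ∀ n : ℕ, ρ * e n = ((νm+1)*((n:ℝ)+2)+ρ) * c n - ((n:ℝ)+1) * t n := by
    intro n
    simp only [he, hc, ht]
    linear_combination (u n * φ' n) * Eφ n
  have J2 : ∀ n : ℕ, ((n:ℝ)+2) * t (n+2) =
      ((νm'+1)*((n:ℝ)+2)+ρ) * c (n+1) - ρ * e n := by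
    intro n
    simp only [he, hc, ht]
    have h1 := huu n
    have h2 := huu (n+1)
    push_cast at h2
    linear_combination (u (n+1) * φ (n+2)) * Eφ' n - (φ (n+2) * φ' n) * h1
      + (φ (n+2) * φ' (n+2)) * h2
  have I4 : ∀ n : ℕ, ((n:ℝ)+2) * t (n+2) =
      ((νm'+1)*((n:ℝ)+2)+ρ) * c (n+1) - ((νm+1)*((n:ℝ)+2)+ρ) * c n + ((n:ℝ)+1) * t n := by
    intro n
    linear_combination J2 n - J1 n
  -- summability facts
  have habseq : ∀ n : ℕ, |((n:ℝ)+1) * t n| =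
      ((n:ℝ)+1) / (Nat.factorial n : ℝ) * ρ ^ n * |φ n * φ' n| := by
    intro n
    rw [ht]
    rw [show ((n:ℝ)+1) * (u n * (φ n * φ' n)) = (((n:ℝ)+1) * u n) * (φ n * φ' n) from by ring]
    rw [abs_mul, abs_of_nonneg (show (0:ℝ) ≤ ((n:ℝ)+1) * u n from by rw [hu]; positivity), hu]
    ring
  have habs : Summable (fun n : ℕ => |((n:ℝ)+1) * t n|) :=
    hsum.congr fun n => (habseq n).symm
  have hsummable : Summable (fun n : ℕ => ((n:ℝ)+1) * t n) := summable_abs_iff.mp habs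
  have hT : Tendsto (fun n : ℕ => ((n:ℝ)+1) * t n) atTop (𝓝 0) :=
    hsummable.tendsto_atTop_zero
  have hTabs : Tendsto (fun n : ℕ => |((n:ℝ)+1) * t n|) atTop (𝓝 0) := by
    have := hT.abs
    simpa using this
  have ht0 : Tendsto t atTop (𝓝 0) := by
    refine squeeze_zero_norm (a := fun n : ℕ => |((n:ℝ)+1) * t n|) (fun n => ?_) hTabs
    show ‖t n‖ ≤ |((n:ℝ)+1) * t n|
    rw [Real.norm_eq_abs, abs_mul, abs_of_nonneg (by positivity : (0:ℝ) ≤ (n:ℝ)+1)]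
    nlinarith [abs_nonneg (t n)]
  have hSlin : ∀ (a b : ℝ) (j : ℕ), Summable (fun n : ℕ => (a*(n:ℝ)+b) * t (n+j)) := by
    intro a b j
    have h1 : Summable (fun n : ℕ => |((↑(n+j):ℝ)+1) * t (n+j)|) :=
      (summable_nat_add_iff j).2 habs
    have h2 : Summable (fun n : ℕ => (|a|+|b|) * |((↑(n+j):ℝ)+1) * t (n+j)|) :=
      h1.mul_left _
    refine summable_abs_iff.mp (Summable.of_nonneg_of_le (fun n => abs_nonneg _)
      (fun n => ?_) h2)
    rw [abs_mul, abs_mul, abs_of_nonneg (by positivity : (0:ℝ) ≤ (↑(n+j):ℝ)+1)]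
    have hb : |a*(n:ℝ)+b| ≤ (|a|+|b|) * ((↑(n+j):ℝ)+1) := by
      have h3 : |a*(n:ℝ)+b| ≤ |a| * (n:ℝ) + |b| := by
        calc |a*(n:ℝ)+b| ≤ |a*(n:ℝ)| + |b| := abs_add_le _ _
          _ = |a| * (n:ℝ) + |b| := by rw [abs_mul, Nat.abs_cast]
      have h4 : (n:ℝ) ≤ (↑(n+j):ℝ)+1 := by push_cast; linarith [Nat.cast_nonneg (α := ℝ) j]
      nlinarith [abs_nonneg a, abs_nonneg b, Nat.cast_nonneg (α := ℝ) n]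
    calc |a*(n:ℝ)+b| * |t (n+j)| ≤ ((|a|+|b|) * ((↑(n+j):ℝ)+1)) * |t (n+j)| := by
            exact mul_le_mul_of_nonneg_right hb (abs_nonneg _)
      _ = (|a|+|b|) * (((↑(n+j):ℝ)+1) * |t (n+j)|) := by ring
  have htshift : ∀ j : ℕ, Tendsto (fun n : ℕ => t (n+j)) atTop (𝓝 0) :=
    fun j => ht0.comp (tendsto_add_atTop_nat j)
  have htlin : ∀ (a b : ℝ) (j : ℕ),
      Tendsto (fun n : ℕ => (a*(n:ℝ)+b) * t (n+j)) atTop (𝓝 0) := by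
    intro a b j
    have h1 : Tendsto (fun n : ℕ => ((↑(n+j):ℝ)+1) * t (n+j)) atTop (𝓝 0) :=
      hT.comp (tendsto_add_atTop_nat j)
    have h2 := (h1.const_mul a).add ((htshift j).const_mul (b - a*((j:ℝ)+1)))
    rw [show a * (0:ℝ) + (b - a*((j:ℝ)+1)) * 0 = 0 by ring] at h2
    refine h2.congr fun n => ?_
    push_cast
    ring
  -- difference sequence for parity subsequences of c
  obtain ⟨g, hg⟩ : ∃ g : ℕ → ℝ, ∀ n, g n =
      (((νm+1)*((n:ℝ)+3)+ρ) * t (n+2) - ((νm'+1)*((n:ℝ)+2)+ρ) * t (n+1)) / ρ :=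
    ⟨_, fun _ => rfl⟩
  have hgc : ∀ n : ℕ, c (n+2) = c n + g n := by
    intro n
    have h1 := I1 (n+1)
    push_cast at h1
    have h2 := I2 n
    rw [hg]
    field_simp
    linear_combination h1 - h2
  have hgsum : Summable g := by
    have h1 : Summable (fun n : ℕ => ((νm+1)*(n:ℝ) + (3*(νm+1)+ρ)) * t (n+2)) := hSlin _ _ 2
    have h2 : Summable (fun n : ℕ => ((νm'+1)*(n:ℝ) + (2*(νm'+1)+ρ)) * t (n+1)) := hSlin _ _ 1
    refine ((h1.sub h2).div_const ρ).congr fun n => ?_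
    rw [hg]; ring
  have hinj2 : Function.Injective (fun i : ℕ => 2*i) := fun a b h => by dsimp at h; omega
  have hinj2' : Function.Injective (fun i : ℕ => 2*i+1) := fun a b h => by dsimp at h; omega
  have hge : Summable (fun i : ℕ => g (2*i)) := hgsum.comp_injective hinj2
  have hgo : Summable (fun i : ℕ => g (2*i+1)) := hgsum.comp_injective hinj2'
  have hparte : ∀ k : ℕ, c (2*k) = c 0 + ∑ i ∈ Finset.range k, g (2*i) := by
    intro k
    induction k with
    | zero => simp
    | succ k ih =>
      have h := hgc (2*k)
      rw [show 2*(k+1) = 2*k+2 from by ring, Finset.sum_range_succ, h, ih]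
      ring
  have hparto : ∀ k : ℕ, c (2*k+1) = c 1 + ∑ i ∈ Finset.range k, g (2*i+1) := by
    intro k
    induction k with
    | zero => simp
    | succ k ih =>
      have h := hgc (2*k+1)
      rw [show 2*(k+1)+1 = 2*k+1+2 from by ring, Finset.sum_range_succ, h, ih]
      ring
  set p : ℝ := c 0 + ∑' i : ℕ, g (2*i) with hp
  set q : ℝ := c 1 + ∑' i : ℕ, g (2*i+1) with hq
  have hce : Tendsto (fun k : ℕ => c (2*k)) atTop (𝓝 p) := by
    have h := hge.hasSum.tendsto_sum_nat
    have h2 := (tendsto_const_nhds (x := c 0) (f := (atTop : Filter ℕ))).add h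
    exact h2.congr fun k => (hparte k).symm
  have hco : Tendsto (fun k : ℕ => c (2*k+1)) atTop (𝓝 q) := by
    have h := hgo.hasSum.tendsto_sum_nat
    have h2 := (tendsto_const_nhds (x := c 1) (f := (atTop : Filter ℕ))).add h
    exact h2.congr fun k => (hparto k).symm
  have hce2 : Tendsto (fun k : ℕ => c (2*k+2)) atTop (𝓝 p) := by
    have h := hce.comp (tendsto_add_atTop_nat 1)
    exact h.congr fun k => by
      show c (2*(k+1)) = c (2*k+2); rw [show 2*(k+1) = 2*k+2 from by ring]
  -- limit equations from I4
  have EQdiv : ∀ n : ℕ, ((νm'+1) + ρ/((n:ℝ)+2)) * c (n+1) - ((νm+1) + ρ/((n:ℝ)+2)) * c n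
      = t (n+2) - (((n:ℝ)+1) * t n) / ((n:ℝ)+2) := by
    intro n
    have h := I4 n
    have h2 : ((n:ℝ)+2) ≠ 0 := by positivity
    field_simp
    linear_combination -h
  have hatTop2 : Tendsto (fun n : ℕ => (n:ℝ)+2) atTop atTop :=
    tendsto_atTop_add_const_right _ 2 tendsto_natCast_atTop_atTop
  have hinv0 : Tendsto (fun n : ℕ => ((n:ℝ)+2)⁻¹) atTop (𝓝 0) :=
    hatTop2.inv_tendsto_atTop
  have hρdiv : Tendsto (fun n : ℕ => ρ/((n:ℝ)+2)) atTop (𝓝 0) := by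
    have := hinv0.const_mul ρ
    rw [mul_zero] at this
    exact this.congr fun n => by rw [div_eq_mul_inv]
  have hR : Tendsto (fun n : ℕ => t (n+2) - (((n:ℝ)+1) * t n) / ((n:ℝ)+2)) atTop (𝓝 0) := by
    have h1 := (htshift 2).sub (hT.mul hinv0)
    rw [show (0:ℝ) - 0*0 = 0 from by ring] at h1
    exact h1.congr fun n => by rw [div_eq_mul_inv]
  have h2k : Tendsto (fun k : ℕ => 2*k) atTop atTop :=
    tendsto_atTop_atTop.2 fun b => ⟨b, fun a ha => by omega⟩
  have h2k1 : Tendsto (fun k : ℕ => 2*k+1) atTop atTop :=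
    tendsto_atTop_atTop.2 fun b => ⟨b, fun a ha => by omega⟩
  -- even-index limit equation
  have E1 : (νm'+1)*q - (νm+1)*p = 0 := by
    have hL : Tendsto (fun k : ℕ => ((νm'+1) + ρ/((↑(2*k):ℝ)+2)) * c (2*k+1)
        - ((νm+1) + ρ/((↑(2*k):ℝ)+2)) * c (2*k)) atTop (𝓝 ((νm'+1)*q - (νm+1)*p)) := by
      have hcc := hρdiv.comp h2k
      have h1 := ((tendsto_const_nhds (x := νm'+1) (f := (atTop : Filter ℕ))).add hcc).mul hco
      have h2 := ((tendsto_const_nhds (x := νm+1) (f := (atTop : Filter ℕ))).add hcc).mul hce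
      have h3 := h1.sub h2
      rw [show ((νm'+1) + 0) * q - ((νm+1) + 0) * p = (νm'+1)*q - (νm+1)*p from by ring] at h3
      exact h3
    have hRc : Tendsto (fun k : ℕ => t (2*k+2) - ((↑(2*k):ℝ)+1) * t (2*k) / ((↑(2*k):ℝ)+2))
        atTop (𝓝 0) := hR.comp h2k
    have heq : (fun k : ℕ => ((νm'+1) + ρ/((↑(2*k):ℝ)+2)) * c (2*k+1)
        - ((νm+1) + ρ/((↑(2*k):ℝ)+2)) * c (2*k))
        = fun k : ℕ => t (2*k+2) - ((↑(2*k):ℝ)+1) * t (2*k) / ((↑(2*k):ℝ)+2) :=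
      funext fun k => EQdiv (2*k)
    rw [heq] at hL
    exact tendsto_nhds_unique hL hRc
  have E2 : (νm'+1)*p - (νm+1)*q = 0 := by
    have hL : Tendsto (fun k : ℕ => ((νm'+1) + ρ/((↑(2*k+1):ℝ)+2)) * c (2*k+1+1)
        - ((νm+1) + ρ/((↑(2*k+1):ℝ)+2)) * c (2*k+1)) atTop (𝓝 ((νm'+1)*p - (νm+1)*q)) := by
      have hcc := hρdiv.comp h2k1
      have hce2' : Tendsto (fun k : ℕ => c (2*k+1+1)) atTop (𝓝 p) := hce2
      have h1 := ((tendsto_const_nhds (x := νm'+1) (f := (atTop : Filter ℕ))).add hcc).mul hce2'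
      have h2 := ((tendsto_const_nhds (x := νm+1) (f := (atTop : Filter ℕ))).add hcc).mul hco
      have h3 := h1.sub h2
      rw [show ((νm'+1) + 0) * p - ((νm+1) + 0) * q = (νm'+1)*p - (νm+1)*q from by ring] at h3
      exact h3
    have hRc : Tendsto (fun k : ℕ => t (2*k+1+2) - ((↑(2*k+1):ℝ)+1) * t (2*k+1) / ((↑(2*k+1):ℝ)+2))
        atTop (𝓝 0) := hR.comp h2k1
    have heq : (fun k : ℕ => ((νm'+1) + ρ/((↑(2*k+1):ℝ)+2)) * c (2*k+1+1)
        - ((νm+1) + ρ/((↑(2*k+1):ℝ)+2)) * c (2*k+1))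
        = fun k : ℕ => t (2*k+1+2) - ((↑(2*k+1):ℝ)+1) * t (2*k+1) / ((↑(2*k+1):ℝ)+2) :=
      funext fun k => EQdiv (2*k+1)
    rw [heq] at hL
    exact tendsto_nhds_unique hL hRc
  have hpq : p + q = 0 := by
    have h3 : (νm' - νm) * (p + q) = 0 := by linear_combination E1 + E2
    rcases mul_eq_zero.mp h3 with h | h
    · exact absurd (sub_eq_zero.mp h).symm hne
    · exact h
  -- telescoping for the inner product
  have hdtel : ∀ N : ℕ, ρ * (c N - c' N)
      = (νm - νm') * ∑ n ∈ Finset.range (N+1), ((n:ℝ)+1) * t n := by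
    intro N
    induction N with
    | zero =>
      rw [Finset.sum_range_one]
      norm_num
      linear_combination I10 - I20
    | succ N ih =>
      rw [Finset.sum_range_succ]
      have h1 := I1 N
      have h2 := I2 N
      push_cast
      linear_combination ih + h1 - h2
  set S : ℝ := ∑' n : ℕ, ((n:ℝ)+1) * t n with hS
  have hSsum : Tendsto (fun N : ℕ => ∑ n ∈ Finset.range (N+1), ((n:ℝ)+1) * t n)
      atTop (𝓝 S) := hsummable.hasSum.tendsto_sum_nat.comp (tendsto_add_atTop_nat 1)
  have hlim1 : Tendsto (fun N : ℕ => ρ * (c N - c' N)) atTop (𝓝 ((νm - νm') * S)) := by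
    have h := hSsum.const_mul (νm - νm')
    exact h.congr fun N => (hdtel N).symm
  have h2k2 : Tendsto (fun k : ℕ => 2*k+2) atTop atTop :=
    tendsto_atTop_atTop.2 fun b => ⟨b, fun a ha => by omega⟩
  have hlim2 : Tendsto (fun k : ℕ => ρ * (c (2*k+2) - c' (2*k+2))) atTop
      (𝓝 ((νm - νm') * S)) := hlim1.comp h2k2
  have hterm2 : Tendsto (fun k : ℕ => ((νm'+1)*((↑(2*k+1):ℝ)+2)+ρ) * t (2*k+2))
      atTop (𝓝 0) := by
    have h := (htlin (νm'+1) (3*(νm'+1)+ρ) 2).comp h2k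
    refine h.congr fun k => ?_
    show ((νm'+1)*((2*k:ℕ):ℝ) + (3*(νm'+1)+ρ)) * t (2*k+2) = _
    push_cast
    ring
  have hlim3 : Tendsto (fun k : ℕ => ρ * (c (2*k+2) - c' (2*k+2))) atTop (𝓝 0) := by
    have hid : ∀ k : ℕ, ρ * (c (2*k+2) - c' (2*k+2))
        = ρ * c (2*k+2) + ρ * c (2*k+1) - ((νm'+1)*((↑(2*k+1):ℝ)+2)+ρ) * t (2*k+2) := by
      intro k
      have h := I2 (2*k+1)
      linear_combination -h
    have h := ((hce2.const_mul ρ).add (hco.const_mul ρ)).sub hterm2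
    rw [show ρ * p + ρ * q - 0 = ρ * (p + q) from by ring, hpq, mul_zero] at h
    exact h.congr fun k => (hid k).symm
  have hfin : (νm - νm') * S = 0 := tendsto_nhds_unique hlim2 hlim3
  have hS0 : S = 0 := by
    rcases mul_eq_zero.mp hfin with h | h
    · exact absurd (sub_eq_zero.mp h) hne
    · exact h
  calc ∑' n : ℕ, ((n : ℝ) + 1) / (Nat.factorial n : ℝ) * ρ ^ n * φ n * φ' n
      = ∑' n : ℕ, ((n:ℝ)+1) * t n := tsum_congr fun n => by rw [ht, hu]; ring
    _ = 0 := hS0
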